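/- Let n ≥ 1, let D ⊆ ℝⁿ be open and bounded with 0 ∈ D, let f : ℝⁿ → ℝⁿ be continuous, and let V : ℝⁿ → ℝ be continuous on the closure of D and continuously differentiable on D, with V 0 = 0. Assume: (i) there is an open neighborhood N of 0 such that V x > 0 for all x ∈ N \ {0}; (ii) (fderiv ℝ V x) (f x) < 0 for all x ∈ D \ {0} with V x < 1; (iii) V x ≥ 1 for all x in the frontier of D; and (iv) for every x ∈ D with V x < 1 there exists a function X : ℝ → ℝⁿ with X 0 = x, X t ∈ D for all t ≥ 0, and HasDerivAt X (f (X t)) t for all t ≥ 0. Then V x > 0 for all x ∈ D \ {0}. -/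

import Mathlib

open Filter Topology

/-- If `g` has negative derivative at `t`, then `g s < g t` for `s` slightly to the right. -/
private lemma right_decrease {g : ℝ → ℝ} {t d : ℝ} (h : HasDerivAt g d t) (hd : d < 0) :
    ∀ᶠ s in 𝓝[>] t, g s < g t := by
  have hs : Tendsto (slope g t) (𝓝[≠] t) (𝓝 d) := hasDerivAt_iff_tendsto_slope.mp h
  have hs' : Tendsto (slope g t) (𝓝[>] t) (𝓝 d) :=
    hs.mono_left (nhdsWithin_mono t fun s hs => ne_of_gt hs)
  have hneg : ∀ᶠ s in 𝓝[>] t, slope g t s < 0 := hs'.eventually_lt_const hd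
  filter_upwards [hneg, self_mem_nhdsWithin] with s h1 h2
  rw [slope_def_field, div_neg_iff] at h1
  rcases h1 with ⟨h1, h2'⟩ | ⟨h1, h2'⟩
  · linarith [sub_pos.mpr (Set.mem_Ioi.mp h2)]
  · linarith

/-- Core lemma: under the hypotheses, no point of `D` can have negative value of `V`. -/
private lemma no_negative_value
    (n : ℕ)
    (D : Set (EuclideanSpace ℝ (Fin n))) (hD : IsOpen D)
    (hDb : Bornology.IsBounded D)
    (h0D : (0 : EuclideanSpace ℝ (Fin n)) ∈ D)
    (f : EuclideanSpace ℝ (Fin n) → EuclideanSpace ℝ (Fin n)) (hf : Continuous f)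
    (V : EuclideanSpace ℝ (Fin n) → ℝ)
    (hVc : ContinuousOn V (closure D))
    (hVd : ContDiffOn ℝ 1 V D)
    (hV0 : V 0 = 0)
    (hVdec : ∀ x ∈ D \ {(0 : EuclideanSpace ℝ (Fin n))}, V x < 1 → fderiv ℝ V x (f x) < 0)
    (hVbd : ∀ x ∈ frontier D, 1 ≤ V x)
    (htraj : ∀ x ∈ D, V x < 1 →
      ∃ X : ℝ → EuclideanSpace ℝ (Fin n), X 0 = x ∧
        (∀ t : ℝ, 0 ≤ t → X t ∈ D) ∧
        (∀ t : ℝ, 0 ≤ t → HasDerivAt X (f (X t)) t))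
    (x : EuclideanSpace ℝ (Fin n)) (hxD : x ∈ D) (hxneg : V x < 0) : False := by
  -- the "Lie derivative" of V
  set W : EuclideanSpace ℝ (Fin n) → ℝ := fun y => fderiv ℝ V y (f y) with hW
  have hWcont : ContinuousOn W D :=
    (hVd.continuousOn_fderiv_of_isOpen hD le_rfl).clm_apply hf.continuousOn
  -- the compact sublevel set
  set c : ℝ := V x with hc
  set K : Set (EuclideanSpace ℝ (Fin n)) := {y ∈ closure D | V y ≤ c} with hKdef
  have hKclosed : IsClosed K :=
    hVc.preimage_isClosed_of_isClosed isClosed_closure isClosed_Iic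
  have hKsubD : K ⊆ D := by
    rintro y ⟨hy1, hy2⟩
    by_contra hyD
    have hyfr : y ∈ frontier D := by
      rw [hD.frontier_eq]
      exact ⟨hy1, hyD⟩
    have := hVbd y hyfr
    linarith
  have hclosD : IsCompact (closure D) :=
    Metric.isCompact_of_isClosed_isBounded isClosed_closure hDb.closure
  have hKcompact : IsCompact K :=
    hclosD.of_isClosed_subset hKclosed (fun y hy => hy.1)
  -- every point of K has W negative
  have hKneg : ∀ y ∈ K, W y < 0 := by
    rintro y hyK
    have hyD := hKsubD hyK
    have hy0 : y ≠ 0 := by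
      rintro rfl
      have := hyK.2
      rw [hV0] at this
      linarith
    exact hVdec y ⟨hyD, hy0⟩ (by have := hyK.2; linarith)
  -- uniform bound on W over K
  have hKne : K.Nonempty := ⟨x, subset_closure hxD, le_refl c⟩
  obtain ⟨z, hzK, hzmax⟩ := hKcompact.exists_isMaxOn hKne (hWcont.mono hKsubD)
  set ε : ℝ := -W z with hε
  have hεpos : 0 < ε := by have := hKneg z hzK; linarith
  have hKbound : ∀ y ∈ K, W y ≤ -ε := by
    intro y hy
    have h2 : W y ≤ W z := hzmax hy
    rw [hε]
    linarith
  -- the trajectory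
  obtain ⟨X, hX0, hXD, hXd⟩ := htraj x hxD (by linarith)
  set g : ℝ → ℝ := fun t => V (X t) with hg
  have hgderiv : ∀ t : ℝ, 0 ≤ t → HasDerivAt g (W (X t)) t := by
    intro t ht
    have hXtD := hXD t ht
    have hdiff : DifferentiableAt ℝ V (X t) :=
      (hVd.contDiffAt (hD.mem_nhds hXtD)).differentiableAt one_ne_zero
    exact hdiff.hasFDerivAt.comp_hasDerivAt t (hXd t ht)
  have hg0 : g 0 = c := by change V (X 0) = c; rw [hX0]
  -- invariance: g t ≤ g 0 for all t ≥ 0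
  have hinv : ∀ t : ℝ, 0 ≤ t → g t ≤ g 0 := by
    by_contra hcon
    push_neg at hcon
    obtain ⟨t₁, ht₁0, ht₁⟩ := hcon
    set T : Set ℝ := {t | 0 ≤ t ∧ g 0 < g t} with hT
    have hTne : T.Nonempty := ⟨t₁, ht₁0, ht₁⟩
    have hTbdd : BddBelow T := ⟨0, fun t ht => ht.1⟩
    set t₀ : ℝ := sInf T with ht₀def
    have ht₀0 : 0 ≤ t₀ := le_csInf hTne fun t ht => ht.1
    -- g t₀ ≤ g 0
    have hbefore : ∀ s, 0 ≤ s → s < t₀ → g s ≤ g 0 := by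
      intro s hs0 hst
      by_contra hgs
      push_neg at hgs
      exact absurd (csInf_le hTbdd ⟨hs0, hgs⟩) (not_le.mpr hst)
    have hgt₀ : g t₀ ≤ g 0 := by
      rcases eq_or_lt_of_le ht₀0 with h | h
      · rw [← h]
      · have hcont : ContinuousAt g t₀ := (hgderiv t₀ ht₀0).continuousAt
        have htend : Tendsto g (𝓝[<] t₀) (𝓝 (g t₀)) :=
          hcont.continuousWithinAt.tendsto
        have : ∀ᶠ s in 𝓝[<] t₀, g s ≤ g 0 := by
          filter_upwards [Ioo_mem_nhdsLT_of_mem (by constructor <;> [exact h; rfl] :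
            t₀ ∈ Set.Ioc (0:ℝ) t₀)] with s hs
          exact hbefore s (le_of_lt hs.1) hs.2
        exact le_of_tendsto htend this
    -- X t₀ ∈ K, so derivative at t₀ is negative
    have hXt₀K : X t₀ ∈ K := ⟨subset_closure (hXD t₀ ht₀0), le_trans hgt₀ hg0.le⟩
    have hdneg : W (X t₀) < 0 := hKneg _ hXt₀K
    have hright : ∀ᶠ s in 𝓝[>] t₀, g s < g t₀ := right_decrease (hgderiv t₀ ht₀0) hdneg
    obtain ⟨u, hu, hIoo⟩ := mem_nhdsGT_iff_exists_Ioo_subset.mp hright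
    -- pick t ∈ T with t < u
    have hlt : sInf T < u := hu
    obtain ⟨t, htT, htu⟩ := exists_lt_of_csInf_lt hTne hlt
    have ht₀t : t₀ ≤ t := csInf_le hTbdd htT
    rcases eq_or_lt_of_le ht₀t with h | h
    · rw [← h] at htT
      exact absurd htT.2 (not_lt.mpr hgt₀)
    · have : g t < g t₀ := hIoo ⟨h, htu⟩
      linarith [htT.2]
  -- quantitative decrease: g t ≤ g 0 - ε * t
  have hquant : ∀ t : ℝ, 0 ≤ t → g t ≤ g 0 - ε * t := by
    have hanti : AntitoneOn (fun t => g t + ε * t) (Set.Ici (0:ℝ)) := by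
      apply antitoneOn_of_deriv_nonpos (convex_Ici 0)
      · exact fun t ht => ((hgderiv t ht).continuousAt.add
          ((continuous_const.mul continuous_id).continuousAt)).continuousWithinAt
      · intro t ht
        rw [interior_Ici] at ht
        exact ((hgderiv t (le_of_lt ht)).add
          ((hasDerivAt_id t).const_mul ε)).differentiableAt.differentiableWithinAt
      · intro t ht
        rw [interior_Ici] at ht
        have hd : HasDerivAt (fun t => g t + ε * t) (W (X t) + ε) t := by
          have := (hgderiv t (le_of_lt ht)).add ((hasDerivAt_id t).const_mul ε)
          exact this.congr_deriv (by ring)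
        rw [hd.deriv]
        have hXtK : X t ∈ K :=
          ⟨subset_closure (hXD t (le_of_lt ht)), by
            have := hinv t (le_of_lt ht); rw [hg0] at this; exact this⟩
        have := hKbound _ hXtK
        linarith
    intro t ht
    have := hanti (Set.self_mem_Ici) (Set.mem_Ici.mpr ht) ht
    simp only [mul_zero, add_zero] at this
    linarith
  -- V is bounded below on the compact closure of D
  obtain ⟨m, hmD, hmmin⟩ := hclosD.exists_isMinOn ⟨0, subset_closure h0D⟩ hVc
  -- contradiction for large t
  set t : ℝ := (g 0 - V m) / ε + 1 with htdef
  have h1' : V m ≤ g 0 := by rw [hg0]; exact hmmin (subset_closure hxD)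
  have hdivnn : 0 ≤ (g 0 - V m) / ε := div_nonneg (by linarith) (le_of_lt hεpos)
  have htpos : 0 ≤ t := by rw [htdef]; linarith
  have h1 := hquant t htpos
  have h2 : V m ≤ g t := hmmin (subset_closure (hXD t htpos))
  have h3 : ε * t = g 0 - V m + ε := by
    rw [htdef, mul_add, mul_one, mul_div_cancel₀ _ (ne_of_gt hεpos)]
  rw [h3] at h1
  linarith

/-- Lemma 4 (lem:positive_definite): a continuously differentiable function `V` that
vanishes at the origin, is positive definite in a neighborhood of the origin, satisfies
the decrease condition on the sublevel set `{V < 1}`, is at least `1` on the boundary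
of `D`, and such that from every point of `{x ∈ D | V x < 1}` there is a trajectory of
`ẋ = f(x)` staying in `D`, is positive on all of `D \ {0}`. -/
theorem positive_definiteness_from_local
    (n : ℕ) (hn : 1 ≤ n)
    (D : Set (EuclideanSpace ℝ (Fin n))) (hD : IsOpen D)
    (hDb : Bornology.IsBounded D)
    (h0D : (0 : EuclideanSpace ℝ (Fin n)) ∈ D)
    (f : EuclideanSpace ℝ (Fin n) → EuclideanSpace ℝ (Fin n)) (hf : Continuous f)
    (V : EuclideanSpace ℝ (Fin n) → ℝ)
    (hVc : ContinuousOn V (closure D))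
    (hVd : ContDiffOn ℝ 1 V D)
    (hV0 : V 0 = 0)
    (N : Set (EuclideanSpace ℝ (Fin n))) (hN : IsOpen N)
    (h0N : (0 : EuclideanSpace ℝ (Fin n)) ∈ N)
    (hVposN : ∀ x ∈ N \ {(0 : EuclideanSpace ℝ (Fin n))}, 0 < V x)
    (hVdec : ∀ x ∈ D \ {(0 : EuclideanSpace ℝ (Fin n))}, V x < 1 → fderiv ℝ V x (f x) < 0)
    (hVbd : ∀ x ∈ frontier D, 1 ≤ V x)
    (htraj : ∀ x ∈ D, V x < 1 →
      ∃ X : ℝ → EuclideanSpace ℝ (Fin n), X 0 = x ∧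
        (∀ t : ℝ, 0 ≤ t → X t ∈ D) ∧
        (∀ t : ℝ, 0 ≤ t → HasDerivAt X (f (X t)) t)) :
    ∀ x ∈ D \ {(0 : EuclideanSpace ℝ (Fin n))}, 0 < V x := by
  rintro x ⟨hxD, hx0⟩
  by_contra hcon
  push_neg at hcon
  rcases lt_or_eq_of_le hcon with hneg | hzero
  · exact no_negative_value n D hD hDb h0D f hf V hVc hVd hV0 hVdec hVbd htraj x hxD hneg
  · -- V x = 0: follow the trajectory briefly to reach a point with negative value
    have hx0' : x ≠ 0 := by simpa using hx0
    have hVx : V x = 0 := hzero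
    obtain ⟨X, hX0, hXD, hXd⟩ := htraj x hxD (by rw [hVx]; norm_num)
    set g : ℝ → ℝ := fun t => V (X t) with hg
    have hgderiv : HasDerivAt g (fderiv ℝ V x (f x)) 0 := by
      have hdiff : DifferentiableAt ℝ V (X 0) := by
        rw [hX0]
        exact (hVd.contDiffAt (hD.mem_nhds hxD)).differentiableAt one_ne_zero
      have := hdiff.hasFDerivAt.comp_hasDerivAt 0 (hXd 0 le_rfl)
      rw [hX0] at this
      exact this
    have hdneg : fderiv ℝ V x (f x) < 0 :=
      hVdec x ⟨hxD, by simpa using hx0'⟩ (by rw [hVx]; norm_num)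
    have hright : ∀ᶠ s in 𝓝[>] (0:ℝ), g s < g 0 := right_decrease hgderiv hdneg
    obtain ⟨s, hs, hgs⟩ := (eventually_mem_nhdsWithin.and hright).exists
    · have hsneg : V (X s) < 0 := by
        have hg00 : g 0 = 0 := by change V (X 0) = 0; rw [hX0]; exact hVx
        rw [hg00] at hgs
        exact hgs
      exact no_negative_value n D hD hDb h0D f hf V hVc hVd hV0 hVdec hVbd htraj
        (X s) (hXD s (le_of_lt (Set.mem_Ioi.mp hs))) hsneg
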